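/- Let ψ: [0,1] → ℝ be defined via two sequences θ_ℓ, θ'_ℓ > 0 (ℓ > k₀) with θ_ℓ = arcsin(√(4 - z_ℓ²)/2) for z_ℓ = z√(n/ℓ) and similarly θ'_ℓ for z'. If 0 < z' < z < 2 and ψ_ℓ = θ'_ℓ - θ_ℓ, then for k₀ < k ≤ ℓ one has ψ_ℓ > 0 and the comparison |ψ_ℓ - ψ_k| ≤ C·((ℓ-k)/(k - k₀))·ψ_k for a constant C depending only on bounds z, z' ∈ [η, 2-η], where k₀ = ⌊z²n/4⌋ and ℓ - k ≤ k - k₀. -/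

import Mathlib

private lemma sqrt4' : Real.sqrt 4 = 2 := by
  rw [show (4 : ℝ) = 2 ^ 2 by norm_num, Real.sqrt_sq (by norm_num)]

private lemma deriv_aux (m j : ℝ) (hm : 0 < m) (hj : 0 < j) {u : ℝ} (hu : 0 < u)
    (h4 : u * m < 4 * j) :
    HasDerivAt (fun u : ℝ => Real.arcsin (Real.sqrt (4 - u * (m / j)) / 2))
      (-(Real.sqrt m / (2 * Real.sqrt u * Real.sqrt (4 * j - u * m)))) u := by
  have hp : 0 < m / j := div_pos hm hj
  have hup : u * (m / j) < 4 := by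
    rw [mul_div_assoc', div_lt_iff₀ hj]; linarith
  have hW : 0 < 4 - u * (m / j) := by linarith
  have hW4 : 4 - u * (m / j) < 4 := by nlinarith
  have hs2 : Real.sqrt (4 - u * (m / j)) < 2 := by
    calc Real.sqrt (4 - u * (m / j)) < Real.sqrt 4 := Real.sqrt_lt_sqrt hW.le hW4
    _ = 2 := sqrt4'
  have hs0 : 0 < Real.sqrt (4 - u * (m / j)) := Real.sqrt_pos.mpr hW
  have h1 : HasDerivAt (fun u : ℝ => 4 - u * (m / j)) (-(m / j)) u := by
    simpa using ((hasDerivAt_id u).mul_const (m / j)).const_sub (4 : ℝ)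
  have h2 : HasDerivAt (fun u : ℝ => Real.sqrt (4 - u * (m / j)))
      (1 / (2 * Real.sqrt (4 - u * (m / j))) * -(m / j)) u :=
    (Real.hasDerivAt_sqrt hW.ne').comp u h1
  have h3 := h2.div_const 2
  have harc : HasDerivAt (fun u : ℝ => Real.arcsin (Real.sqrt (4 - u * (m / j)) / 2))
      (1 / Real.sqrt (1 - (Real.sqrt (4 - u * (m / j)) / 2) ^ 2)
        * (1 / (2 * Real.sqrt (4 - u * (m / j))) * -(m / j) / 2)) u :=
    (Real.hasDerivAt_arcsin
      (by intro h; nlinarith [Real.sqrt_nonneg (4 - u * (m / j))])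
      (by intro h; nlinarith)).comp u h3
  convert harc using 1
  have e3 : 1 - (Real.sqrt (4 - u * (m / j)) / 2) ^ 2 = u * (m / j) / 4 := by
    rw [div_pow, Real.sq_sqrt hW.le]; ring
  have e4 : Real.sqrt (u * (m / j) / 4) = Real.sqrt u * Real.sqrt (m / j) / 2 := by
    rw [Real.sqrt_div (by positivity) 4, Real.sqrt_mul hu.le, sqrt4']
  have e1 : Real.sqrt (4 * j - u * m) = Real.sqrt j * Real.sqrt (4 - u * (m / j)) := by
    rw [show 4 * j - u * m = j * (4 - u * (m / j)) by field_simp,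
      Real.sqrt_mul hj.le]

  have e2 : Real.sqrt m = Real.sqrt (m / j) * Real.sqrt j := by
    rw [← Real.sqrt_mul hp.le, div_mul_cancel₀ _ hj.ne']
  have hsu : 0 < Real.sqrt u := Real.sqrt_pos.mpr hu
  have hsp : 0 < Real.sqrt (m / j) := Real.sqrt_pos.mpr hp
  have hsj : 0 < Real.sqrt j := Real.sqrt_pos.mpr hj
  rw [e3, e4, e1, e2]
  set t := Real.sqrt (4 - u * (m / j)) with ht
  set a := Real.sqrt (m / j) with ha
  have haP : m / j = a ^ 2 := (Real.sq_sqrt hp.le).symm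
  rw [haP]
  set b := Real.sqrt j with hb
  set c := Real.sqrt u with hc
  have ht0 : 0 < t := hs0
  field_simp

private lemma psi_pos {z' z m j : ℝ} (hz' : 0 < z') (hzz : z' < z) (hm : 0 < m) (hj : 0 < j)
    (h4 : z ^ 2 * m < 4 * j) :
    Real.arcsin (Real.sqrt (4 - z ^ 2 * (m / j)) / 2)
      < Real.arcsin (Real.sqrt (4 - z' ^ 2 * (m / j)) / 2) := by
  have hp : 0 < m / j := div_pos hm hj
  have hzp : z ^ 2 * (m / j) < 4 := by rw [mul_div_assoc', div_lt_iff₀ hj]; linarith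
  have hz2 : z' ^ 2 < z ^ 2 := by nlinarith
  have hz'p : z' ^ 2 * (m / j) < z ^ 2 * (m / j) := mul_lt_mul_of_pos_right hz2 hp
  have hW : 0 < 4 - z ^ 2 * (m / j) := by linarith
  have hW' : 4 - z ^ 2 * (m / j) < 4 - z' ^ 2 * (m / j) := by linarith
  have hub : Real.sqrt (4 - z' ^ 2 * (m / j)) ≤ 2 := by
    calc Real.sqrt (4 - z' ^ 2 * (m / j)) ≤ Real.sqrt 4 :=
      Real.sqrt_le_sqrt (by nlinarith)
    _ = 2 := sqrt4'
  have hlt : Real.sqrt (4 - z ^ 2 * (m / j)) < Real.sqrt (4 - z' ^ 2 * (m / j)) :=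
    Real.sqrt_lt_sqrt hW.le hW'
  have hmem1 : Real.sqrt (4 - z ^ 2 * (m / j)) / 2 ∈ Set.Icc (-1 : ℝ) 1 := by
    constructor
    · linarith [Real.sqrt_nonneg (4 - z ^ 2 * (m / j))]
    · linarith
  have hmem2 : Real.sqrt (4 - z' ^ 2 * (m / j)) / 2 ∈ Set.Icc (-1 : ℝ) 1 := by
    constructor
    · linarith [Real.sqrt_nonneg (4 - z' ^ 2 * (m / j))]
    · linarith
  exact Real.strictMonoOn_arcsin hmem1 hmem2 (by linarith)

private lemma poly_aux {r d A : ℝ} (hr : 0 < r) (hr2 : 2 * r < 1) (hd : 0 < d)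
    (hA : 2 * d ≤ A) : (1 - 2 * r) ^ 2 * (A + 4 * (r * d)) ≤ A := by
  nlinarith [mul_nonneg (mul_nonneg hr.le (by linarith : (0:ℝ) ≤ 1 - r)) (by linarith : (0:ℝ) ≤ A - 2 * d),
    mul_nonneg (mul_nonneg hr.le hd.le) (by linarith : (0:ℝ) ≤ 1 - 2 * r),
    mul_nonneg (mul_nonneg (mul_nonneg hr.le hr.le) hd.le) (by linarith : (0:ℝ) ≤ 1 - r)]

set_option maxHeartbeats 1000000 in
theorem stmt_16 (η : ℝ) (hη : 0 < η) :
    ∃ C : ℝ, 0 < C ∧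
      ∀ (z z' : ℝ) (n k ℓ : ℕ),
        z ∈ Set.Icc η (2 - η) → z' ∈ Set.Icc η (2 - η) → z' < z → 1 ≤ n →
        Nat.floor (z ^ 2 * n / 4) < k → k ≤ ℓ →
        ℓ - k ≤ k - Nat.floor (z ^ 2 * n / 4) →
        (0 < (Real.arcsin (Real.sqrt (4 - (z' * Real.sqrt (n / ℓ)) ^ 2) / 2)
              - Real.arcsin (Real.sqrt (4 - (z * Real.sqrt (n / ℓ)) ^ 2) / 2)))
        ∧ |(Real.arcsin (Real.sqrt (4 - (z' * Real.sqrt (n / ℓ)) ^ 2) / 2)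
              - Real.arcsin (Real.sqrt (4 - (z * Real.sqrt (n / ℓ)) ^ 2) / 2))
            - (Real.arcsin (Real.sqrt (4 - (z' * Real.sqrt (n / k)) ^ 2) / 2)
              - Real.arcsin (Real.sqrt (4 - (z * Real.sqrt (n / k)) ^ 2) / 2))|
          ≤ C * (((ℓ : ℝ) - k) / ((k : ℝ) - Nat.floor (z ^ 2 * n / 4)))
            * (Real.arcsin (Real.sqrt (4 - (z' * Real.sqrt (n / k)) ^ 2) / 2)
              - Real.arcsin (Real.sqrt (4 - (z * Real.sqrt (n / k)) ^ 2) / 2)) := by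
  refine ⟨2, two_pos, ?_⟩
  intro z z' n k ℓ hz hz' hzz hn hk hkl hdiff
  obtain ⟨hz1, hz2⟩ := hz
  obtain ⟨hz'1, hz'2⟩ := hz'
  have hz'0 : 0 < z' := lt_of_lt_of_le hη hz'1
  have hz0 : 0 < z := hz'0.trans hzz
  have hN : (0:ℝ) < (n:ℝ) := by exact_mod_cast hn
  have hk0 : 0 < k := lt_of_le_of_lt (Nat.zero_le _) hk
  have hl0 : 0 < ℓ := lt_of_lt_of_le hk0 hkl
  have hK : (0:ℝ) < (k:ℝ) := by exact_mod_cast hk0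
  have hL : (0:ℝ) < (ℓ:ℝ) := by exact_mod_cast hl0
  have hKL : (k:ℝ) ≤ (ℓ:ℝ) := by exact_mod_cast hkl
  set K0 := Nat.floor (z ^ 2 * (n:ℝ) / 4) with hK0def
  have hfl : z ^ 2 * (n:ℝ) / 4 < (K0:ℝ) + 1 := Nat.lt_floor_add_one _
  have hK0k : (K0:ℝ) + 1 ≤ (k:ℝ) := by exact_mod_cast hk
  have h4k : z ^ 2 * (n:ℝ) < 4 * (k:ℝ) := by linarith
  have h4l : z ^ 2 * (n:ℝ) < 4 * (ℓ:ℝ) := by linarith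
  have hrw : ∀ (w : ℝ) (j : ℕ), (w * Real.sqrt ((n:ℝ) / (j:ℝ))) ^ 2
      = w ^ 2 * ((n:ℝ) / (j:ℝ)) := by
    intro w j
    rw [mul_pow, Real.sq_sqrt (by positivity)]
  simp only [hrw]
  set ψl := Real.arcsin (Real.sqrt (4 - z' ^ 2 * ((n:ℝ) / (ℓ:ℝ))) / 2)
    - Real.arcsin (Real.sqrt (4 - z ^ 2 * ((n:ℝ) / (ℓ:ℝ))) / 2) with hψl
  set ψk := Real.arcsin (Real.sqrt (4 - z' ^ 2 * ((n:ℝ) / (k:ℝ))) / 2)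
    - Real.arcsin (Real.sqrt (4 - z ^ 2 * ((n:ℝ) / (k:ℝ))) / 2) with hψk
  have hψl_pos : 0 < ψl := sub_pos.mpr (psi_pos hz'0 hzz hN hL h4l)
  have hψk_pos : 0 < ψk := sub_pos.mpr (psi_pos hz'0 hzz hN hK h4k)
  refine ⟨hψl_pos, ?_⟩
  have hKK0 : (0:ℝ) < (k:ℝ) - (K0:ℝ) := by linarith
  rcases eq_or_lt_of_le hkl with rfl | hkl'
  · have e : ψl = ψk := by rw [hψl, hψk]
    rw [e, sub_self, abs_zero]
    simp
  · have hkl1 : (k:ℝ) + 1 ≤ (ℓ:ℝ) := by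
      have : k + 1 ≤ ℓ := hkl'
      exact_mod_cast this
    have hab : z' ^ 2 < z ^ 2 := by nlinarith
    have ha0 : (0:ℝ) < z' ^ 2 := by positivity
    have hcont : ∀ p : ℝ, Continuous (fun u : ℝ => Real.arcsin (Real.sqrt (4 - u * p) / 2)) := by
      intro p
      exact Real.continuous_arcsin.comp
        ((Real.continuous_sqrt.comp
          (continuous_const.sub (continuous_id.mul continuous_const))).div_const 2)
    obtain ⟨c, hc, hmvt⟩ := exists_ratio_hasDerivAt_eq_ratio_slope
      (fun u => Real.arcsin (Real.sqrt (4 - u * ((n:ℝ) / (ℓ:ℝ))) / 2))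
      (fun u => -(Real.sqrt (n:ℝ) / (2 * Real.sqrt u * Real.sqrt (4 * (ℓ:ℝ) - u * (n:ℝ)))))
      hab ((hcont _).continuousOn)
      (fun x hx => deriv_aux (n:ℝ) (ℓ:ℝ) hN hL (lt_trans ha0 hx.1)
        (by linarith [mul_lt_mul_of_pos_right hx.2 hN]))
      (fun u => Real.arcsin (Real.sqrt (4 - u * ((n:ℝ) / (k:ℝ))) / 2))
      (fun u => -(Real.sqrt (n:ℝ) / (2 * Real.sqrt u * Real.sqrt (4 * (k:ℝ) - u * (n:ℝ)))))
      ((hcont _).continuousOn)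
      (fun x hx => deriv_aux (n:ℝ) (k:ℝ) hN hK (lt_trans ha0 hx.1)
        (by linarith [mul_lt_mul_of_pos_right hx.2 hN]))
    have hc0 : 0 < c := lt_trans ha0 hc.1
    have hcN : c * (n:ℝ) < z ^ 2 * (n:ℝ) := mul_lt_mul_of_pos_right hc.2 hN
    have hSK0 : (0:ℝ) < 4 * (k:ℝ) - c * (n:ℝ) := by linarith
    have hSL0 : (0:ℝ) < 4 * (ℓ:ℝ) - c * (n:ℝ) := by linarith
    set SK := Real.sqrt (4 * (k:ℝ) - c * (n:ℝ)) with hSK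
    set SL := Real.sqrt (4 * (ℓ:ℝ) - c * (n:ℝ)) with hSL
    have hSKp : 0 < SK := hSK ▸ Real.sqrt_pos.mpr hSK0
    have hSLp : 0 < SL := hSL ▸ Real.sqrt_pos.mpr hSL0
    have hscp : 0 < Real.sqrt c := Real.sqrt_pos.mpr hc0
    have hsNp : 0 < Real.sqrt (n:ℝ) := Real.sqrt_pos.mpr hN
    have hne1 : Real.sqrt (n:ℝ) ≠ 0 := hsNp.ne'
    have hne2 : Real.sqrt c ≠ 0 := hscp.ne'
    have hne3 : SK ≠ 0 := hSKp.ne'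
    have hne4 : SL ≠ 0 := hSLp.ne'
    have cancel : ∀ X Y : ℝ,
        X * (Real.sqrt (n:ℝ) / (2 * Real.sqrt c * SL))
          = Y * (Real.sqrt (n:ℝ) / (2 * Real.sqrt c * SK)) → X * SK = Y * SL := by
      intro X Y h
      have h' := congrArg (fun t => t * (2 * Real.sqrt c * (SL * SK) / Real.sqrt (n:ℝ))) h
      calc X * SK
          = X * (Real.sqrt (n:ℝ) / (2 * Real.sqrt c * SL))
              * (2 * Real.sqrt c * (SL * SK) / Real.sqrt (n:ℝ)) := by
            field_simp
        _ = Y * (Real.sqrt (n:ℝ) / (2 * Real.sqrt c * SK))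
              * (2 * Real.sqrt c * (SL * SK) / Real.sqrt (n:ℝ)) := h'
        _ = Y * SL := by
            field_simp
    have h2 : (Real.arcsin (Real.sqrt (4 - z' ^ 2 * ((n:ℝ) / (k:ℝ))) / 2)
          - Real.arcsin (Real.sqrt (4 - z ^ 2 * ((n:ℝ) / (k:ℝ))) / 2))
          * (Real.sqrt (n:ℝ) / (2 * Real.sqrt c * SL))
        = (Real.arcsin (Real.sqrt (4 - z' ^ 2 * ((n:ℝ) / (ℓ:ℝ))) / 2)
          - Real.arcsin (Real.sqrt (4 - z ^ 2 * ((n:ℝ) / (ℓ:ℝ))) / 2))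
          * (Real.sqrt (n:ℝ) / (2 * Real.sqrt c * SK)) := by
      linear_combination hmvt
    have key : ψl * SL = ψk * SK := by
      have h3 := cancel _ _ h2
      rw [hψl, hψk]
      linarith [h3]
    have hSKSL : SK ≤ SL := by rw [hSK, hSL]; exact Real.sqrt_le_sqrt (by linarith)
    have hle : ψl ≤ ψk := by
      have h1 : ψk * SK ≤ ψk * SL := mul_le_mul_of_nonneg_left hSKSL hψk_pos.le
      exact le_of_mul_le_mul_right (key.le.trans h1) hSLp
    by_cases hcase : (k:ℝ) - (K0:ℝ) ≤ 2 * ((ℓ:ℝ) - (k:ℝ))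
    · rw [abs_of_nonpos (by linarith)]
      have h1 : (1:ℝ) ≤ 2 * (((ℓ:ℝ) - (k:ℝ)) / ((k:ℝ) - (K0:ℝ))) := by
        rw [← mul_div_assoc]
        exact (one_le_div hKK0).mpr hcase
      have e : 2 * (((ℓ:ℝ) - (k:ℝ)) / ((k:ℝ) - (K0:ℝ))) * ψk
          = 2 * ((ℓ:ℝ) - (k:ℝ)) * ψk / ((k:ℝ) - (K0:ℝ)) := by ring
      rw [e, le_div_iff₀ hKK0]
      linarith [mul_le_mul_of_nonneg_left hcase hψk_pos.le, mul_pos hψl_pos hKK0]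
    · push_neg at hcase
      have hLK1 : (1:ℝ) ≤ (ℓ:ℝ) - (k:ℝ) := by linarith
      have hA2 : 2 * ((k:ℝ) - (K0:ℝ)) ≤ 4 * (k:ℝ) - c * (n:ℝ) := by
        have hkk2 : (2:ℝ) ≤ (k:ℝ) - (K0:ℝ) := by linarith
        have hz4 : z ^ 2 * (n:ℝ) < 4 * ((K0:ℝ) + 1) := by linarith
        linarith
      set r := ((ℓ:ℝ) - (k:ℝ)) / ((k:ℝ) - (K0:ℝ)) with hr
      have hr_eq : r * ((k:ℝ) - (K0:ℝ)) = (ℓ:ℝ) - (k:ℝ) := div_mul_cancel₀ _ hKK0.ne'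
      have hr_pos : 0 < r := div_pos (by linarith) hKK0
      have hr_lt : 2 * r < 1 := by
        rw [hr, ← mul_div_assoc]
        exact (div_lt_one hKK0).mpr hcase
      have hsq : ((1 - 2 * r) * SL) ^ 2 ≤ 4 * (k:ℝ) - c * (n:ℝ) := by
        have hSL2 : SL ^ 2 = 4 * (ℓ:ℝ) - c * (n:ℝ) := by rw [hSL]; exact Real.sq_sqrt hSL0.le
        have hBA : 4 * (ℓ:ℝ) - c * (n:ℝ)
            = (4 * (k:ℝ) - c * (n:ℝ)) + 4 * (r * ((k:ℝ) - (K0:ℝ))) := by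
          rw [hr_eq]; ring
        rw [mul_pow, hSL2, hBA]
        exact poly_aux hr_pos hr_lt hKK0 hA2
      have hsk_ge : (1 - 2 * r) * SL ≤ SK := by
        rw [hSK]
        exact (Real.le_sqrt (mul_nonneg (by linarith : (0:ℝ) ≤ 1 - 2 * r) hSLp.le)
          hSK0.le).mpr hsq
      have hlow : (1 - 2 * r) * ψk ≤ ψl := by
        have h3 : (1 - 2 * r) * ψk * SL ≤ ψl * SL := by
          calc (1 - 2 * r) * ψk * SL = ψk * ((1 - 2 * r) * SL) := by ring
            _ ≤ ψk * SK := mul_le_mul_of_nonneg_left hsk_ge hψk_pos.le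
            _ = ψl * SL := key.symm
        exact le_of_mul_le_mul_right h3 hSLp
      rw [abs_of_nonpos (by linarith)]
      have hlow2 := mul_le_mul_of_nonneg_right hlow hKK0.le
      have hexp : (1 - 2 * r) * ψk * ((k:ℝ) - (K0:ℝ))
          = ψk * ((k:ℝ) - (K0:ℝ)) - 2 * ψk * (r * ((k:ℝ) - (K0:ℝ))) := by ring
      rw [hexp, hr_eq] at hlow2
      have e2 : 2 * r * ψk = 2 * ((ℓ:ℝ) - (k:ℝ)) * ψk / ((k:ℝ) - (K0:ℝ)) := by
        rw [hr]; ring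
      rw [e2, le_div_iff₀ hKK0]
      linarith [hlow2]
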